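/- Let A ∈ ℚ^{m×n} be a rational matrix and let C_P = {u ∈ ℝᵐ : uᵀA = 0, u ≥ 0} be its projection cone, with extreme rays e¹,…,eʳ. Then: (i) the function E(b) = max_k (eᵏ)ᵀb is an LP-consistency tester for A, i.e., for every b ∈ ℝᵐ, {x ∈ ℝⁿ : Ax ≥ b} ≠ ∅ if and only if E(b) ≤ 0; and (ii) for any finite family {vⁱ}_{i∈I} ⊆ ℝᵐ such that V(b) = max_i (vⁱ)ᵀb is an LP-consistency tester for A, the family {vⁱ} contains a positive scalar multiple of each extreme ray eᵏ of C_P. -/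

import Mathlib

open Matrix Finset

/-- e is an extreme ray of the cone C: e ∈ C, e ≠ 0, and whenever e = u + v with
u, v ∈ C, both u and v are nonnegative multiples of e. -/
def IsExtremeRay {m : ℕ} (C : Set (Fin m → ℝ)) (e : Fin m → ℝ) : Prop :=
  e ∈ C ∧ e ≠ 0 ∧ ∀ u ∈ C, ∀ v ∈ C, u + v = e → ∃ s : ℝ, 0 ≤ s ∧ u = s • e

lemma farkasFin : ∀ (p : ℕ) {m : ℕ} (a : Fin p → Fin m → ℝ) (c : Fin m → ℝ),
    (¬ ∃ lam : Fin p → ℝ, (∀ i, 0 ≤ lam i) ∧ c = ∑ i, lam i • a i) →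
    ∃ b : Fin m → ℝ, (∀ i, a i ⬝ᵥ b ≤ 0) ∧ 0 < c ⬝ᵥ b := by
  intro p
  induction p with
  | zero =>
    intro m a c h
    refine ⟨c, fun i => i.elim0, ?_⟩
    have hc : c ≠ 0 := by
      intro hc0
      exact h ⟨fun i => 0, fun i => le_refl _, by simp [hc0]⟩
    have hnn : 0 ≤ c ⬝ᵥ c := Finset.sum_nonneg fun i _ => mul_self_nonneg (c i)
    rcases lt_or_eq_of_le hnn with h1 | h1
    · exact h1
    · exact absurd (dotProduct_self_eq_zero.mp h1.symm) hc
  | succ p ih =>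
    intro m a c h
    set A : Fin p → Fin m → ℝ := fun i => a i.castSucc with hA
    set w : Fin m → ℝ := a (Fin.last p) with hw
    have h1 : ¬ ∃ lam : Fin p → ℝ, (∀ i, 0 ≤ lam i) ∧ c = ∑ i, lam i • A i := by
      rintro ⟨lam, hlam, hc⟩
      refine h ⟨Fin.snoc lam 0, ?_, ?_⟩
      · intro i
        refine Fin.lastCases ?_ ?_ i
        · simp
        · intro j; simpa using hlam j
      · rw [Fin.sum_univ_castSucc]
        simpa using hc
    obtain ⟨b, hab, hcb⟩ := ih A c h1
    by_cases hwb : w ⬝ᵥ b ≤ 0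
    · refine ⟨b, ?_, hcb⟩
      intro i
      refine Fin.lastCases ?_ ?_ i
      · exact hwb
      · exact hab
    push_neg at hwb
    set A' : Fin p → Fin m → ℝ := fun i => A i - ((A i ⬝ᵥ b) / (w ⬝ᵥ b)) • w with hA'
    set c' : Fin m → ℝ := c - ((c ⬝ᵥ b) / (w ⬝ᵥ b)) • w with hc'
    have h2 : ¬ ∃ lam : Fin p → ℝ, (∀ i, 0 ≤ lam i) ∧ c' = ∑ i, lam i • A' i := by
      rintro ⟨lam, hlam, hsum⟩
      set μ : ℝ := (c ⬝ᵥ b - ∑ i, lam i * (A i ⬝ᵥ b)) / (w ⬝ᵥ b) with hμ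
      have hμpos : 0 ≤ μ := by
        apply div_nonneg _ (le_of_lt hwb)
        have : ∑ i, lam i * (A i ⬝ᵥ b) ≤ 0 :=
          Finset.sum_nonpos fun i _ => mul_nonpos_of_nonneg_of_nonpos (hlam i) (hab i)
        linarith
      have hS : ∑ i, lam i • A' i
          = ∑ i, lam i • A i - ((∑ i, lam i * (A i ⬝ᵥ b)) / (w ⬝ᵥ b)) • w := by
        have hterm : ∀ i : Fin p, lam i • A' i
            = lam i • A i - (lam i * (A i ⬝ᵥ b) / (w ⬝ᵥ b)) • w := by
          intro i
          show lam i • (A i - (A i ⬝ᵥ b / w ⬝ᵥ b) • w) = _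
          rw [smul_sub, smul_smul, mul_div_assoc]
        simp only [hterm]
        rw [Finset.sum_sub_distrib, ← Finset.sum_smul, Finset.sum_div]
      have hceq : c = ∑ i, lam i • A i + μ • w := by
        have h4 : c = c' + ((c ⬝ᵥ b) / (w ⬝ᵥ b)) • w := by rw [hc']; abel
        rw [h4, hsum, hS, hμ, sub_div, sub_smul]
        abel
      refine h ⟨Fin.snoc lam μ, ?_, ?_⟩
      · intro i
        refine Fin.lastCases ?_ ?_ i
        · simpa using hμpos
        · intro j; simpa using hlam j
      · rw [Fin.sum_univ_castSucc]
        simpa using hceq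
    obtain ⟨b', hab', hcb'⟩ := ih A' c' h2
    refine ⟨b' - ((w ⬝ᵥ b') / (w ⬝ᵥ b)) • b, ?_, ?_⟩
    · intro i
      refine Fin.lastCases ?_ ?_ i
      · rw [dotProduct_sub, dotProduct_smul]
        rw [smul_eq_mul, div_mul_cancel₀ _ (ne_of_gt hwb)]
        simp [hw]
      · intro j
        have := hab' j
        rw [hA'] at this
        rw [sub_dotProduct, smul_dotProduct] at this
        rw [dotProduct_sub, dotProduct_smul]
        simp only [smul_eq_mul] at this ⊢
        have hne := ne_of_gt hwb
        calc A j ⬝ᵥ b' - w ⬝ᵥ b' / w ⬝ᵥ b * (A j ⬝ᵥ b)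
            = A j ⬝ᵥ b' - A j ⬝ᵥ b / w ⬝ᵥ b * (w ⬝ᵥ b') := by ring
          _ ≤ 0 := this
    · have := hcb'
      rw [hc', sub_dotProduct, smul_dotProduct] at this
      rw [dotProduct_sub, dotProduct_smul]
      simp only [smul_eq_mul] at this ⊢
      calc (0:ℝ) < c ⬝ᵥ b' - c ⬝ᵥ b / w ⬝ᵥ b * (w ⬝ᵥ b') := this
        _ = c ⬝ᵥ b' - w ⬝ᵥ b' / w ⬝ᵥ b * (c ⬝ᵥ b) := by ring

noncomputable def suppF {m : ℕ} (u : Fin m → ℝ) : Finset (Fin m) :=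
  Finset.univ.filter (fun i => u i ≠ 0)

lemma mem_suppF {m : ℕ} {u : Fin m → ℝ} {i : Fin m} : i ∈ suppF u ↔ u i ≠ 0 := by
  simp [suppF]

lemma support_key {m n : ℕ} (Ar : Matrix (Fin m) (Fin n) ℝ) (b : Fin m → ℝ)
    (C : Set (Fin m → ℝ))
    (hC : C = {u | (∀ j, ∑ i, u i * Ar i j = 0) ∧ ∀ i, 0 ≤ u i})
    (hray : ∀ u ∈ C, IsExtremeRay C u → u ⬝ᵥ b ≤ 0) :
    ∀ u ∈ C, u ⬝ᵥ b ≤ 0 := by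
  subst hC
  suffices H : ∀ N : ℕ, ∀ u, (∀ j, ∑ i, u i * Ar i j = 0) → (∀ i, 0 ≤ u i) →
      (suppF u).card ≤ N → u ⬝ᵥ b ≤ 0 by
    intro u hu
    exact H (suppF u).card u hu.1 hu.2 le_rfl
  intro N
  induction N with
  | zero =>
    intro u _ _ hcard
    have : suppF u = ∅ := Finset.card_eq_zero.mp (Nat.le_zero.mp hcard)
    have hu0 : u = 0 := by
      funext i
      by_contra hi
      exact absurd (mem_suppF.mpr hi) (by simp [this])
    rw [hu0]
    simp
  | succ N ih =>
    intro u huA hunn hcard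
    by_cases hu0 : u = 0
    · rw [hu0]; simp
    have huC : u ∈ {u | (∀ j, ∑ i, u i * Ar i j = 0) ∧ ∀ i, 0 ≤ u i} := ⟨huA, hunn⟩
    by_cases hex : IsExtremeRay {u | (∀ j, ∑ i, u i * Ar i j = 0) ∧ ∀ i, 0 ≤ u i} u
    · exact hray u huC hex
    -- u is not an extreme ray: get a decomposition
    have hnot : ¬ ∀ p ∈ {u | (∀ j, ∑ i, u i * Ar i j = 0) ∧ ∀ i, 0 ≤ u i},
        ∀ q ∈ {u | (∀ j, ∑ i, u i * Ar i j = 0) ∧ ∀ i, 0 ≤ u i},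
        p + q = u → ∃ s : ℝ, 0 ≤ s ∧ p = s • u := fun hforall => hex ⟨huC, hu0, hforall⟩
    push_neg at hnot
    obtain ⟨p, hpC, q, hqC, hpq, hps⟩ := hnot
    -- basic facts
    have upos : ∀ i ∈ suppF u, 0 < u i := fun i hi =>
      lt_of_le_of_ne (hunn i) (Ne.symm (mem_suppF.mp hi))
    have hsU : (suppF u).Nonempty := by
      rcases Function.ne_iff.mp hu0 with ⟨i, hi⟩
      exact ⟨i, mem_suppF.mpr (by simpa using hi)⟩
    have hple : ∀ i, p i ≤ u i := by
      intro i
      have := congr_fun hpq i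
      have := hqC.2 i
      simp only [Pi.add_apply] at *
      linarith
    have hpzero : ∀ i, u i = 0 → p i = 0 := fun i hi =>
      le_antisymm (hi ▸ hple i) (hpC.2 i)
    -- the scalar c and pivot i₀
    set c : ℝ := (suppF u).inf' hsU (fun i => p i / u i) with hc
    obtain ⟨i₀, hi₀mem, hi₀⟩ := Finset.exists_mem_eq_inf' hsU (fun i => p i / u i)
    have hc0 : 0 ≤ c :=
      Finset.le_inf' hsU _ (fun i hi => div_nonneg (hpC.2 i) (upos i hi).le)
    have hcle : ∀ i ∈ suppF u, c ≤ p i / u i := fun i hi => Finset.inf'_le _ hi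
    -- the direction d
    set d : Fin m → ℝ := p - c • u with hd
    have hdnn : ∀ i, 0 ≤ d i := by
      intro i
      by_cases hi : u i = 0
      · simp [hd, hi, hpzero i hi]
      · have hi' : i ∈ suppF u := mem_suppF.mpr hi
        have h1 : c * u i ≤ p i := by
          have h2 := hcle i hi'
          rw [le_div_iff₀ (upos i hi')] at h2
          exact h2
        simp only [hd, Pi.sub_apply, Pi.smul_apply, smul_eq_mul]
        linarith
    have hdA : ∀ j, ∑ i, d i * Ar i j = 0 := by
      intro j
      simp only [hd, Pi.sub_apply, Pi.smul_apply, smul_eq_mul, sub_mul,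
        Finset.sum_sub_distrib, mul_assoc, ← Finset.mul_sum, hpC.1 j, huA j, mul_zero, sub_zero]
    have hd0 : d ≠ 0 := by
      intro h0
      exact hps c hc0 (by rw [← sub_eq_zero]; exact h0)
    have hdi₀ : d i₀ = 0 := by
      have hu₀ : u i₀ ≠ 0 := mem_suppF.mp hi₀mem
      simp only [hd, Pi.sub_apply, Pi.smul_apply, smul_eq_mul, hc, hi₀]
      field_simp
      ring
    have hdsub : suppF d ⊆ (suppF u).erase i₀ := by
      intro i hi
      have hdi : d i ≠ 0 := mem_suppF.mp hi
      have hui : u i ≠ 0 := by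
        intro hui0
        exact hdi (by simp [hd, hui0, hpzero i hui0])
      refine Finset.mem_erase.mpr ⟨?_, mem_suppF.mpr hui⟩
      intro h0; exact hdi (h0 ▸ hdi₀)
    have hdcard : (suppF d).card ≤ N := by
      have h1 := Finset.card_le_card hdsub
      have h2 := Finset.card_erase_of_mem hi₀mem
      have h3 : 1 ≤ (suppF u).card := Finset.card_pos.mpr hsU
      omega
    have hdb : d ⬝ᵥ b ≤ 0 := ih d hdA hdnn hdcard
    -- the step size t
    have hsD : (suppF d).Nonempty := by
      rcases Function.ne_iff.mp hd0 with ⟨i, hi⟩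
      exact ⟨i, mem_suppF.mpr (by simpa using hi)⟩
    have dpos : ∀ i ∈ suppF d, 0 < d i := fun i hi =>
      lt_of_le_of_ne (hdnn i) (Ne.symm (mem_suppF.mp hi))
    have hdsuppu : ∀ i ∈ suppF d, i ∈ suppF u := fun i hi =>
      Finset.mem_of_mem_erase (hdsub hi)
    set t : ℝ := (suppF d).inf' hsD (fun i => u i / d i) with ht
    obtain ⟨i₁, hi₁mem, hi₁⟩ := Finset.exists_mem_eq_inf' hsD (fun i => u i / d i)
    have ht0 : 0 < t := by
      rw [ht, hi₁]
      exact div_pos (upos i₁ (hdsuppu i₁ hi₁mem)) (dpos i₁ hi₁mem)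
    have htle : ∀ i ∈ suppF d, t ≤ u i / d i := fun i hi => Finset.inf'_le _ hi
    set u' : Fin m → ℝ := u - t • d with hu'
    have hu'nn : ∀ i, 0 ≤ u' i := by
      intro i
      by_cases hi : d i = 0
      · simp [hu', hi, hunn i]
      · have hi' : i ∈ suppF d := mem_suppF.mpr hi
        have h1 : t * d i ≤ u i := by
          have := htle i hi'
          rw [le_div_iff₀ (dpos i hi')] at this
          linarith
        simp only [hu', Pi.sub_apply, Pi.smul_apply, smul_eq_mul]
        linarith
    have hu'A : ∀ j, ∑ i, u' i * Ar i j = 0 := by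
      intro j
      simp only [hu', Pi.sub_apply, Pi.smul_apply, smul_eq_mul, sub_mul,
        Finset.sum_sub_distrib, mul_assoc, ← Finset.mul_sum, hdA j, huA j, mul_zero, sub_zero]
    have hu'i₁ : u' i₁ = 0 := by
      have hd₁ : d i₁ ≠ 0 := mem_suppF.mp hi₁mem
      simp only [hu', Pi.sub_apply, Pi.smul_apply, smul_eq_mul, ht, hi₁]
      field_simp
      ring
    have hu'sub : suppF u' ⊆ (suppF u).erase i₁ := by
      intro i hi
      have hui' : u' i ≠ 0 := mem_suppF.mp hi
      have hui : u i ≠ 0 := by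
        intro hui0
        have hdi : d i = 0 := by
          by_contra hdi
          exact (mem_suppF.mp (hdsuppu i (mem_suppF.mpr hdi))) hui0
        exact hui' (by simp [hu', hui0, hdi])
      refine Finset.mem_erase.mpr ⟨?_, mem_suppF.mpr hui⟩
      intro h0; exact hui' (h0 ▸ hu'i₁)
    have hu'card : (suppF u').card ≤ N := by
      have h1 := Finset.card_le_card hu'sub
      have h2 := Finset.card_erase_of_mem (hdsuppu i₁ hi₁mem)
      have h3 : 1 ≤ (suppF u).card := Finset.card_pos.mpr hsU
      omega
    have hu'b : u' ⬝ᵥ b ≤ 0 := ih u' hu'A hu'nn hu'card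
    have hdecomp : u = u' + t • d := by rw [hu']; abel
    calc u ⬝ᵥ b = u' ⬝ᵥ b + t * (d ⬝ᵥ b) := by
          rw [hdecomp, add_dotProduct, smul_dotProduct, smul_eq_mul]
      _ ≤ 0 := add_nonpos hu'b (mul_nonpos_of_nonneg_of_nonpos ht0.le hdb)

lemma farkasT {ι : Type} [Fintype ι] {m : ℕ} (a : ι → Fin m → ℝ) (c : Fin m → ℝ)
    (h : ¬ ∃ lam : ι → ℝ, (∀ i, 0 ≤ lam i) ∧ c = ∑ i, lam i • a i) :
    ∃ b : Fin m → ℝ, (∀ i, a i ⬝ᵥ b ≤ 0) ∧ 0 < c ⬝ᵥ b := by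
  set eqv := Fintype.equivFin ι with heqv
  have hnc : ¬ ∃ lam : Fin (Fintype.card ι) → ℝ,
      (∀ i, 0 ≤ lam i) ∧ c = ∑ i, lam i • (a ∘ eqv.symm) i := by
    rintro ⟨lam, hlam, hsum⟩
    refine h ⟨lam ∘ eqv, fun i => hlam _, ?_⟩
    rw [hsum]
    exact (Fintype.sum_equiv eqv _ _ (fun i => by simp)).symm
  obtain ⟨b, hab, hcb⟩ := farkasFin (Fintype.card ι) (a ∘ eqv.symm) c hnc
  exact ⟨b, fun i => by simpa using hab (eqv i), hcb⟩

lemma feas_dot_nonpos {m n : ℕ} (Ar : Matrix (Fin m) (Fin n) ℝ) (b : Fin m → ℝ)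
    (x : Fin n → ℝ) (hx : ∀ i, b i ≤ ∑ j, Ar i j * x j) (u : Fin m → ℝ)
    (huA : ∀ j, ∑ i, u i * Ar i j = 0) (hunn : ∀ i, 0 ≤ u i) :
    u ⬝ᵥ b ≤ 0 := by
  calc u ⬝ᵥ b ≤ ∑ i, u i * ∑ j, Ar i j * x j :=
        Finset.sum_le_sum fun i _ => mul_le_mul_of_nonneg_left (hx i) (hunn i)
    _ = ∑ j, (∑ i, u i * Ar i j) * x j := by
        simp only [Finset.mul_sum, Finset.sum_mul, mul_assoc]
        exact Finset.sum_comm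
    _ = 0 := by simp [huA]

noncomputable def gens {m n : ℕ} (Ar : Matrix (Fin m) (Fin n) ℝ) :
    (Fin n ⊕ Fin n) ⊕ Fin m → Fin m → ℝ
  | Sum.inl (Sum.inl j) => fun i => Ar i j
  | Sum.inl (Sum.inr j) => fun i => -Ar i j
  | Sum.inr i' => fun i => if i = i' then -1 else 0

lemma feasible_of_cone {m n : ℕ} (Ar : Matrix (Fin m) (Fin n) ℝ) (b : Fin m → ℝ)
    (lam : (Fin n ⊕ Fin n) ⊕ Fin m → ℝ) (hlam : ∀ t, 0 ≤ lam t)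
    (hb : b = ∑ t, lam t • gens Ar t) :
    ∃ x : Fin n → ℝ, ∀ i, b i ≤ ∑ j, Ar i j * x j := by
  refine ⟨fun j => lam (.inl (.inl j)) - lam (.inl (.inr j)), fun i => ?_⟩
  have hbi : b i = ∑ j, lam (.inl (.inl j)) * Ar i j
      - ∑ j, lam (.inl (.inr j)) * Ar i j - lam (.inr i) := by
    rw [hb]
    simp only [Finset.sum_apply, Pi.smul_apply, smul_eq_mul]
    rw [Fintype.sum_sum_type, Fintype.sum_sum_type]
    simp only [gens, mul_ite, mul_neg, mul_one, mul_zero,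
      Finset.sum_ite_eq, Finset.mem_univ, if_true]
    rw [Finset.sum_neg_distrib]
    ring
  rw [hbi]
  have h2 : ∑ j, Ar i j * (lam (.inl (.inl j)) - lam (.inl (.inr j)))
      = ∑ j, lam (.inl (.inl j)) * Ar i j - ∑ j, lam (.inl (.inr j)) * Ar i j := by
    rw [← Finset.sum_sub_distrib]
    exact Finset.sum_congr rfl fun j _ => by ring
  rw [h2]
  have := hlam (.inr i)
  linarith


lemma memP_add {m n : ℕ} (Ar : Matrix (Fin m) (Fin n) ℝ) {u w : Fin m → ℝ}
    (hu : (∀ j, ∑ i, u i * Ar i j = 0) ∧ ∀ i, 0 ≤ u i)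
    (hw : (∀ j, ∑ i, w i * Ar i j = 0) ∧ ∀ i, 0 ≤ w i) :
    (∀ j, ∑ i, (u + w) i * Ar i j = 0) ∧ ∀ i, 0 ≤ (u + w) i := by
  constructor
  · intro j
    simp only [Pi.add_apply, add_mul, Finset.sum_add_distrib, hu.1 j, hw.1 j, add_zero]
  · intro i
    exact add_nonneg (hu.2 i) (hw.2 i)

lemma memP_smul {m n : ℕ} (Ar : Matrix (Fin m) (Fin n) ℝ) {u : Fin m → ℝ} (t : ℝ) (ht : 0 ≤ t)
    (hu : (∀ j, ∑ i, u i * Ar i j = 0) ∧ ∀ i, 0 ≤ u i) :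
    (∀ j, ∑ i, (t • u) i * Ar i j = 0) ∧ ∀ i, 0 ≤ (t • u) i := by
  constructor
  · intro j
    simp only [Pi.smul_apply, smul_eq_mul, mul_assoc, ← Finset.mul_sum, hu.1 j, mul_zero]
  · intro i
    exact mul_nonneg ht (hu.2 i)

/-- let C_P = {u : uᵀA = 0, u ≥ 0} be the projection cone of a rational
matrix A, with (complete set of) extreme rays e¹,…,eʳ. Then (i) E(b) = max_k (eᵏ)ᵀb
is an LP-consistency tester for A, and (ii) every finite family {vⁱ} giving an
LP-consistency tester V(b) = max_i (vⁱ)ᵀb contains a positive multiple of each eᵏ. -/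
theorem stmt15 {m n : ℕ} (A : Matrix (Fin m) (Fin n) ℚ)
    (CP : Set (Fin m → ℝ))
    (hCP : CP = {u | (∀ j, ∑ i, u i * (A i j : ℝ) = 0) ∧ ∀ i, 0 ≤ u i})
    (r : ℕ) (e : Fin r → Fin m → ℝ)
    (hext : ∀ k, IsExtremeRay CP (e k))
    (hall : ∀ u, IsExtremeRay CP u → ∃ (k : Fin r) (s : ℝ), 0 < s ∧ u = s • e k) :
    (∀ b : Fin m → ℝ,
        (∃ x : Fin n → ℝ, ∀ i, b i ≤ ∑ j, (A i j : ℝ) * x j) ↔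
          ∀ k, ∑ i, e k i * b i ≤ 0) ∧
    (∀ (s : ℕ) (v : Fin s → Fin m → ℝ),
        (∀ b : Fin m → ℝ,
          (∃ x : Fin n → ℝ, ∀ i, b i ≤ ∑ j, (A i j : ℝ) * x j) ↔
            ∀ i, ∑ j, v i j * b j ≤ 0) →
        ∀ k, ∃ (i : Fin s) (c : ℝ), 0 < c ∧ v i = c • e k) := by
  subst hCP
  constructor
  · intro b
    constructor
    · rintro ⟨x, hx⟩ k
      exact feas_dot_nonpos (fun i j => ((A i j : ℚ) : ℝ)) b x hx (e k)
        (hext k).1.1 (hext k).1.2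
    · intro hk
      by_contra hx
      have hnc : ¬ ∃ lam : (Fin n ⊕ Fin n) ⊕ Fin m → ℝ, (∀ t, 0 ≤ lam t) ∧
          b = ∑ t, lam t • gens (fun i j => ((A i j : ℚ) : ℝ)) t := by
        rintro ⟨lam, hlam, hb⟩
        exact hx (feasible_of_cone _ b lam hlam hb)
      obtain ⟨u, hgu, hbu⟩ := farkasT (gens (fun i j => ((A i j : ℚ) : ℝ))) b hnc
      have huA : ∀ j, ∑ i, u i * (A i j : ℝ) = 0 := by
        intro j
        have h1 := hgu (.inl (.inl j))
        have h2 := hgu (.inl (.inr j))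
        simp only [gens, dotProduct] at h1 h2
        have h3 : ∑ i, u i * (A i j : ℝ) = ∑ i, ((A i j : ℚ) : ℝ) * u i :=
          Finset.sum_congr rfl fun i _ => mul_comm _ _
        have h4 : ∑ i, -((A i j : ℚ) : ℝ) * u i = -∑ i, ((A i j : ℚ) : ℝ) * u i := by
          rw [← Finset.sum_neg_distrib]
          exact Finset.sum_congr rfl fun i _ => by ring
        rw [h4] at h2
        rw [h3]
        linarith
      have hunn : ∀ i, 0 ≤ u i := by
        intro i'
        have h1 := hgu (.inr i')
        simp only [gens, dotProduct, ite_mul, neg_one_mul, zero_mul,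
          Finset.sum_ite_eq', Finset.mem_univ, if_true] at h1
        linarith
      have hkey := support_key (fun i j => ((A i j : ℚ) : ℝ)) b _ rfl
        (fun w hw hexw => by
          obtain ⟨k, t, ht, rfl⟩ := hall w hexw
          rw [smul_dotProduct, smul_eq_mul]
          exact mul_nonpos_of_nonneg_of_nonpos ht.le (hk k))
        u ⟨huA, hunn⟩
      rw [dotProduct_comm] at hbu
      exact absurd hkey (not_le.mpr hbu)
  · intro s v htest k
    have hvA : ∀ i j, ∑ t, v i t * (A t j : ℝ) = 0 := by
      intro i j
      have hS : ∀ x : Fin n → ℝ, ∑ t, v i t * (∑ j', ((A t j' : ℚ) : ℝ) * x j') ≤ 0 :=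
        fun x => (htest (fun t => ∑ j', ((A t j' : ℚ) : ℝ) * x j')).mp ⟨x, fun t => le_rfl⟩ i
      have hval : ∑ t, v i t * (∑ j', ((A t j' : ℚ) : ℝ) * (-(Pi.single j 1 : Fin n → ℝ)) j')
          = - ∑ t, v i t * (∑ j', ((A t j' : ℚ) : ℝ) * (Pi.single j 1 : Fin n → ℝ) j') := by
        rw [← Finset.sum_neg_distrib]
        refine Finset.sum_congr rfl fun t _ => ?_
        simp [mul_neg, Finset.sum_neg_distrib]
      have h0 : ∑ t, v i t * (∑ j', ((A t j' : ℚ) : ℝ) * (Pi.single j 1 : Fin n → ℝ) j') = 0 := by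
        have ha := hS (Pi.single j 1)
        have hb := hS (-(Pi.single j 1))
        rw [hval] at hb
        linarith
      calc ∑ t, v i t * (A t j : ℝ)
          = ∑ t, v i t * (∑ j', ((A t j' : ℚ) : ℝ) * (Pi.single j 1 : Fin n → ℝ) j') := by
            refine Finset.sum_congr rfl fun t _ => ?_
            congr 1
            simp [Pi.single_apply, mul_ite, Finset.sum_ite_eq']
        _ = 0 := h0
    have hvnn : ∀ i t0, 0 ≤ v i t0 := by
      intro i t0
      have hfeas : ∃ x : Fin n → ℝ, ∀ t,
          (fun t => if t = t0 then (-1:ℝ) else 0) t ≤ ∑ j, ((A t j : ℚ) : ℝ) * x j := by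
        refine ⟨0, fun t => ?_⟩
        simp only [Pi.zero_apply, mul_zero, Finset.sum_const_zero]
        split <;> norm_num
      have h1 := (htest _).mp hfeas i
      simp only [mul_ite, mul_neg_one, mul_zero, Finset.sum_ite_eq',
        Finset.mem_univ, if_true] at h1
      linarith
    have hcone : ∃ lam : Fin s → ℝ, (∀ i, 0 ≤ lam i) ∧ e k = ∑ i, lam i • v i := by
      by_contra hnc
      obtain ⟨b, hvb, hekb⟩ := farkasT v (e k) hnc
      obtain ⟨x, hx⟩ := (htest b).mpr (fun i => hvb i)
      have h2 := feas_dot_nonpos (fun i j => ((A i j : ℚ) : ℝ)) b x hx (e k)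
        (hext k).1.1 (hext k).1.2
      exact absurd h2 (not_le.mpr hekb)
    obtain ⟨lam, hlam, hek⟩ := hcone
    have hne : e k ≠ 0 := (hext k).2.1
    obtain ⟨i₀, hi₀⟩ : ∃ i₀, lam i₀ • v i₀ ≠ 0 := by
      by_contra hall0
      push_neg at hall0
      exact hne (by rw [hek]; exact Finset.sum_eq_zero fun i _ => hall0 i)
    have hm1 : (∀ j, ∑ t, (lam i₀ • v i₀) t * (A t j : ℝ) = 0) ∧ ∀ t, 0 ≤ (lam i₀ • v i₀) t :=
      memP_smul _ _ (hlam i₀) ⟨hvA i₀, hvnn i₀⟩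
    have hm2 : (∀ j, ∑ t, (∑ i ∈ Finset.univ.erase i₀, lam i • v i) t * (A t j : ℝ) = 0) ∧
        ∀ t, 0 ≤ (∑ i ∈ Finset.univ.erase i₀, lam i • v i) t := by
      refine Finset.sum_induction (fun i : Fin s => lam i • v i)
        (fun w : Fin m → ℝ => (∀ j, ∑ t, w t * (A t j : ℝ) = 0) ∧ ∀ t, 0 ≤ w t)
        (fun a b ha hb => memP_add _ ha hb) ⟨by simp, by simp⟩ ?_
      intro i _
      exact memP_smul _ _ (hlam i) ⟨hvA i, hvnn i⟩
    have hsplit : (lam i₀ • v i₀) + ∑ i ∈ Finset.univ.erase i₀, lam i • v i = e k := by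
      exact (Finset.add_sum_erase Finset.univ (fun i => lam i • v i)
        (Finset.mem_univ i₀)).trans hek.symm
    obtain ⟨t, ht0, heq⟩ := (hext k).2.2 _ hm1 _ hm2 hsplit
    have hlam₀ : lam i₀ ≠ 0 := fun h0 => hi₀ (by simp [h0])
    have hlam₀' : 0 < lam i₀ := lt_of_le_of_ne (hlam i₀) (Ne.symm hlam₀)
    have ht : 0 < t := by
      rcases lt_or_eq_of_le ht0 with h | h
      · exact h
      · refine absurd (heq.trans ?_) hi₀
        rw [← h, zero_smul]
    refine ⟨i₀, t / lam i₀, div_pos ht hlam₀', ?_⟩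
    have hv : v i₀ = (lam i₀)⁻¹ • (lam i₀ • v i₀) := by
      rw [smul_smul, inv_mul_cancel₀ hlam₀, one_smul]
    rw [hv, heq, smul_smul, div_eq_inv_mul]
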